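/- If a standard balanced tableau R on the Rothe diagram of w has entries i and i+1 in different rows and different columns, then the filling obtained by exchanging i and i+1 is again a standard balanced tableau on the same diagram. -/
import Mathlib


/-- The Coxeter length of `w`: the number of inversion pairs. -/
def invCount {n : ℕ} (w : Equiv.Perm (Fin n)) : ℕ :=
  (Finset.univ.filter fun p : Fin n × Fin n => p.1 < p.2 ∧ w p.2 < w p.1).card

/-- The Rothe diagram of `w` (0-indexed): the cells `(i, w j)` for inversions `i < j`,
`w j < w i`, as a subset of `ℕ × ℕ` (first coordinate the row, drawn with row `0` at the
bottom so that "above" means larger first coordinate; second coordinate the column). -/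
def RotheD (n : ℕ) (w : Equiv.Perm (Fin n)) : Finset (ℕ × ℕ) :=
  (Finset.univ.filter fun p : Fin n × Fin n => p.1 < p.2 ∧ w p.2 < w p.1).image
    fun p => ((p.1 : ℕ), (w p.2 : ℕ))

/-- A standard balanced tableau on a diagram `D`: a bijective filling of the cells of `D`
by `1, …, |D|` such that for every cell, the number of larger entries to its right in its
row equals the number of smaller entries above it in its column. -/
def IsSBT (D : Finset (ℕ × ℕ)) (T : ℕ × ℕ → ℕ) : Prop :=
  Set.InjOn T ↑D ∧ D.image T = Finset.Icc 1 D.card ∧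
  ∀ x ∈ D, (D.filter fun y => y.1 = x.1 ∧ x.2 < y.2 ∧ T x < T y).card
    = (D.filter fun y => y.2 = x.2 ∧ x.1 < y.1 ∧ T y < T x).card

theorem sbt_general (D : Finset (ℕ × ℕ)) (T : ℕ × ℕ → ℕ) (i : ℕ)
    (hinj : Set.InjOn T ↑D) (himg : D.image T = Finset.Icc 1 D.card)
    (hbal : ∀ x ∈ D, (D.filter fun y => y.1 = x.1 ∧ x.2 < y.2 ∧ T x < T y).card
      = (D.filter fun y => y.2 = x.2 ∧ x.1 < y.1 ∧ T y < T x).card)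
    (x y : ℕ × ℕ) (hx : x ∈ D) (hy : y ∈ D)
    (hTx : T x = i) (hTy : T y = i + 1) (hrow : x.1 ≠ y.1) (hcol : x.2 ≠ y.2) :
    (Set.InjOn (fun z => if T z = i then i + 1 else if T z = i + 1 then i else T z) ↑D ∧
     D.image (fun z => if T z = i then i + 1 else if T z = i + 1 then i else T z)
       = Finset.Icc 1 D.card ∧
     ∀ x' ∈ D, (D.filter fun y' => y'.1 = x'.1 ∧ x'.2 < y'.2 ∧
          (if T x' = i then i + 1 else if T x' = i + 1 then i else T x')
        < (if T y' = i then i + 1 else if T y' = i + 1 then i else T y')).card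
      = (D.filter fun y' => y'.2 = x'.2 ∧ x'.1 < y'.1 ∧
          (if T y' = i then i + 1 else if T y' = i + 1 then i else T y')
        < (if T x' = i then i + 1 else if T x' = i + 1 then i else T x')).card) := by
  have hi : i ∈ Finset.Icc 1 D.card := by
    rw [← himg, ← hTx]; exact Finset.mem_image_of_mem T hx
  have hi1 : i + 1 ∈ Finset.Icc 1 D.card := by
    rw [← himg, ← hTy]; exact Finset.mem_image_of_mem T hy
  rw [Finset.mem_Icc] at hi hi1
  have key : ∀ z ∈ D, ∀ u ∈ D, ¬(z = x ∧ u = y) → ¬(z = y ∧ u = x) →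
      ((if T z = i then i + 1 else if T z = i + 1 then i else T z)
        < (if T u = i then i + 1 else if T u = i + 1 then i else T u) ↔ T z < T u) := by
    intro z hz u hu h1 h2
    have f1 : T z ≠ i ∨ T u ≠ i + 1 := by
      by_contra h; push_neg at h
      exact h1 ⟨hinj hz hx (h.1.trans hTx.symm), hinj hu hy (h.2.trans hTy.symm)⟩
    have f2 : T z ≠ i + 1 ∨ T u ≠ i := by
      by_contra h; push_neg at h
      exact h2 ⟨hinj hz hy (h.1.trans hTy.symm), hinj hu hx (h.2.trans hTx.symm)⟩
    rcases f1 with f1 | f1 <;> rcases f2 with f2 | f2 <;> split_ifs <;> omega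
  refine ⟨?_, ?_, ?_⟩
  · intro a ha b hb hab
    simp only at hab
    apply hinj ha hb
    have : Equiv.swap i (i + 1) (T a) = Equiv.swap i (i + 1) (T b) := by
      simpa [Equiv.swap_apply_def] using hab
    exact (Equiv.swap i (i + 1)).injective this
  · have hdef : ∀ z ∈ D, (fun z => if T z = i then i + 1 else if T z = i + 1 then i else T z) z
        = (fun z => Equiv.swap i (i + 1) (T z)) z := by
      intro z _; simp [Equiv.swap_apply_def]
    rw [Finset.image_congr hdef]
    have : D.image (fun z => Equiv.swap i (i + 1) (T z))
        = (D.image T).image (Equiv.swap i (i + 1)) := by rw [Finset.image_image]; rfl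
    rw [this, himg]
    ext a
    simp only [Finset.mem_image, Finset.mem_Icc, Equiv.swap_apply_def]
    constructor
    · rintro ⟨b, hb, rfl⟩
      split_ifs <;> omega
    · intro ha
      refine ⟨if a = i then i + 1 else if a = i + 1 then i else a, ?_, ?_⟩ <;>
        split_ifs <;> omega
  · intro z hz
    have hr : (D.filter fun u => u.1 = z.1 ∧ z.2 < u.2 ∧
          (if T z = i then i + 1 else if T z = i + 1 then i else T z)
        < (if T u = i then i + 1 else if T u = i + 1 then i else T u))
        = D.filter fun u => u.1 = z.1 ∧ z.2 < u.2 ∧ T z < T u := by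
      apply Finset.filter_congr
      intro u hu
      refine and_congr_right fun h1 => and_congr_right fun _ => key z hz u hu ?_ ?_
      · rintro ⟨rfl, rfl⟩; exact hrow h1.symm
      · rintro ⟨rfl, rfl⟩; exact hrow h1
    have hc : (D.filter fun u => u.2 = z.2 ∧ z.1 < u.1 ∧
          (if T u = i then i + 1 else if T u = i + 1 then i else T u)
        < (if T z = i then i + 1 else if T z = i + 1 then i else T z))
        = D.filter fun u => u.2 = z.2 ∧ z.1 < u.1 ∧ T u < T z := by
      apply Finset.filter_congr
      intro u hu
      refine and_congr_right fun h1 => and_congr_right fun _ => key u hu z hz ?_ ?_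
      · rintro ⟨rfl, rfl⟩; exact hcol h1
      · rintro ⟨rfl, rfl⟩; exact hcol h1.symm
    rw [hr, hc]
    exact hbal z hz

/-- Exchanging the entries `i` and `i+1` of a standard balanced tableau, when they lie
in different rows and different columns, yields a standard balanced tableau. -/
theorem sbt_commutation (n : ℕ) (w : Equiv.Perm (Fin n)) (T : ℕ × ℕ → ℕ) (i : ℕ)
    (hT : IsSBT (RotheD n w) T)
    (x y : ℕ × ℕ) (hx : x ∈ RotheD n w) (hy : y ∈ RotheD n w)
    (hTx : T x = i) (hTy : T y = i + 1) (hrow : x.1 ≠ y.1) (hcol : x.2 ≠ y.2) :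
    IsSBT (RotheD n w)
      (fun z => if T z = i then i + 1 else if T z = i + 1 then i else T z) := by
  exact sbt_general _ T i hT.1 hT.2.1 hT.2.2 x y hx hy hTx hTy hrow hcol
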